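/- Let JH be strongly nilpotent with index p: for all points X^{(1)},…,X^{(p)} ∈ k^n, the product JH(X^{(1)})···JH(X^{(p)}) = 0. Then for any i, j ∈ {1,…,n} and any multi-indices α^{(1)},…,α^{(p)} ∈ ℤ_{≥0}^n, the coefficient identity Σ_{1 ≤ k_1,…,k_{p-1} ≤ n} ∏_{ℓ=1}^p H_{k_{ℓ-1}, α^{(ℓ)}+e_{k_ℓ}} = 0 holds, where k_0 = i, k_p = j, H_{m,β} denotes β! times the coefficient of X^β in H_m, and e_k is the k-th standard basis multi-index. -/

import Mathlib

theorem listProd_entry {R : Type*} [CommSemiring R] {n : ℕ} :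
    ∀ (p : ℕ) (M : Fin p → Matrix (Fin n) (Fin n) R) (i j : Fin n),
    (List.ofFn M).prod i j =
      ∑ κ : Fin (p + 1) → Fin n,
        (if κ 0 = i ∧ κ (Fin.last p) = j then
          ∏ ℓ : Fin p, M ℓ (κ ℓ.castSucc) (κ ℓ.succ)
        else 0) := by
  intro p
  induction p with
  | zero =>
    intro M i j
    have key : (∑ κ : Fin 1 → Fin n,
        if κ 0 = i ∧ κ (Fin.last 0) = j then
          ∏ ℓ : Fin 0, M ℓ (κ ℓ.castSucc) (κ ℓ.succ) else 0) =
        ∑ a : Fin n, if a = i ∧ a = j then (1:R) else 0 :=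
      Fintype.sum_equiv (Equiv.funUnique (Fin 1) (Fin n)) _ _ (fun κ => by
        simp [Equiv.funUnique, Fin.last])
    rw [key]
    simp only [List.ofFn_zero, List.prod_nil, Matrix.one_apply, ite_and]
    rw [Finset.sum_ite_eq' Finset.univ i (fun a => if a = j then (1:R) else 0)]
    simp
  | succ p ih =>
    intro M i j
    rw [List.ofFn_succ, List.prod_cons, Matrix.mul_apply]
    simp_rw [ih (fun ℓ => M ℓ.succ)]
    have key : (∑ κ : Fin (p + 2) → Fin n,
        if κ 0 = i ∧ κ (Fin.last (p+1)) = j then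
          ∏ ℓ : Fin (p+1), M ℓ (κ ℓ.castSucc) (κ ℓ.succ) else 0) =
        ∑ q : Fin n × (Fin (p+1) → Fin n),
          if q.1 = i ∧ q.2 (Fin.last p) = j then
            M 0 q.1 (q.2 0) * ∏ ℓ : Fin p, M ℓ.succ (q.2 ℓ.castSucc) (q.2 ℓ.succ)
          else 0 :=
      (Fintype.sum_equiv (Fin.consEquiv (fun _ : Fin (p+2) => Fin n)) _ _ (fun q => by
        simp only [Fin.consEquiv_apply, Fin.prod_univ_succ, Fin.cons_zero, Fin.cons_succ,
          ← Fin.succ_last, ← Fin.succ_castSucc, Fin.castSucc_zero]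
        try rfl
)).symm
    rw [key, Fintype.sum_prod_type, Finset.sum_comm]
    rw [show (∑ a : Fin n, M 0 i a * ∑ κ : Fin (p+1) → Fin n,
        if κ 0 = a ∧ κ (Fin.last p) = j then
          ∏ ℓ : Fin p, M ℓ.succ (κ ℓ.castSucc) (κ ℓ.succ) else 0) =
        ∑ κ : Fin (p+1) → Fin n, ∑ a : Fin n, M 0 i a *
        (if κ 0 = a ∧ κ (Fin.last p) = j then
          ∏ ℓ : Fin p, M ℓ.succ (κ ℓ.castSucc) (κ ℓ.succ) else 0) by
        simp_rw [Finset.mul_sum]; exact Finset.sum_comm]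
    refine Finset.sum_congr rfl fun κ' _ => ?_
    simp only [ite_and, mul_ite, mul_zero]
    rw [Finset.sum_ite_eq Finset.univ (κ' 0), Finset.sum_ite_eq' Finset.univ i]
    simp

open MvPolynomial

theorem coeff_mul_of_disjoint {R τ : Type*} [CommSemiring R] [DecidableEq τ]
    (P : τ → Prop) [DecidablePred P] (f g : MvPolynomial τ R) (d e : τ →₀ ℕ)
    (hf : ∀ x ∈ f.vars, P x) (hg : ∀ x ∈ g.vars, ¬ P x)
    (hd : ∀ x ∈ d.support, P x) (he : ∀ x ∈ e.support, ¬ P x) :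
    MvPolynomial.coeff (d + e) (f * g) =
      MvPolynomial.coeff d f * MvPolynomial.coeff e g := by
  rw [MvPolynomial.coeff_mul]
  refine Finset.sum_eq_single_of_mem (d, e)
    (Finset.HasAntidiagonal.mem_antidiagonal.mpr rfl) (fun q hq hne => ?_)
  by_contra hz
  have ha : q.1 ∈ f.support :=
    MvPolynomial.mem_support_iff.mpr (fun h => hz (by rw [h, zero_mul]))
  have hb : q.2 ∈ g.support :=
    MvPolynomial.mem_support_iff.mpr (fun h => hz (by rw [h, mul_zero]))
  have hsum := Finset.HasAntidiagonal.mem_antidiagonal.mp hq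
  have hxy : ∀ x, q.1 x + q.2 x = d x + e x := fun x => by
    rw [← Finsupp.add_apply, ← Finsupp.add_apply, hsum]
  have h1 : q.1 = d := by
    ext x
    by_cases hP : P x
    · have hq2 : q.2 x = 0 := by
        by_contra h
        exact hg x ((MvPolynomial.mem_vars x).mpr ⟨q.2, hb, Finsupp.mem_support_iff.mpr h⟩) hP
      have he0 : e x = 0 := by
        by_contra h
        exact he x (Finsupp.mem_support_iff.mpr h) hP
      have := hxy x; omega
    · have hq1 : q.1 x = 0 := by
        by_contra h
        exact hP (hf x ((MvPolynomial.mem_vars x).mpr ⟨q.1, ha, Finsupp.mem_support_iff.mpr h⟩))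
      have hd0 : d x = 0 := by
        by_contra h
        exact hP (hd x (Finsupp.mem_support_iff.mpr h))
      omega
  have h2 : q.2 = e := by
    rw [h1] at hsum; exact add_left_cancel hsum
  exact hne (Prod.ext h1 h2)

theorem coeff_prod_rename {R : Type*} [CommSemiring R] {p n : ℕ}
    (f : Fin p → MvPolynomial (Fin n) R) (A : Fin p → (Fin n →₀ ℕ)) (s : Finset (Fin p)) :
    MvPolynomial.coeff (∑ ℓ ∈ s, (A ℓ).mapDomain (Prod.mk ℓ))
        (∏ ℓ ∈ s, MvPolynomial.rename (Prod.mk ℓ) (f ℓ)) =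
      ∏ ℓ ∈ s, MvPolynomial.coeff (A ℓ) (f ℓ) := by
  classical
  induction s using Finset.induction_on with
  | empty => simp
  | @insert a s ha ih =>
    rw [Finset.sum_insert ha, Finset.prod_insert ha, Finset.prod_insert ha]
    rw [coeff_mul_of_disjoint (fun x : Fin p × Fin n => x.1 = a) _ _ _ _
      (fun x hx => ?_) (fun x hx => ?_) (fun x hx => ?_) (fun x hx => ?_)]
    · rw [ih, MvPolynomial.coeff_rename_mapDomain _ (fun u v h => by
        injection h with h1 h2)]
    · obtain ⟨y, _, rfl⟩ := Finset.mem_image.mp (MvPolynomial.vars_rename _ _ hx)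
      rfl
    · obtain ⟨ℓ, hℓ, hx'⟩ := Finset.mem_biUnion.mp (MvPolynomial.vars_prod _ hx)
      obtain ⟨y, _, rfl⟩ := Finset.mem_image.mp (MvPolynomial.vars_rename _ _ hx')
      exact fun h => ha (h ▸ hℓ)
    · obtain ⟨y, _, rfl⟩ := Finset.mem_image.mp (Finsupp.mapDomain_support hx)
      rfl
    · have hsub := Finsupp.mem_support_finset_sum _ hx
      obtain ⟨ℓ, hℓ, hx'⟩ := hsub
      obtain ⟨y, _, rfl⟩ := Finset.mem_image.mp (Finsupp.mapDomain_support hx')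
      exact fun h => ha (h ▸ hℓ)

theorem coeff_pderiv' {R σ : Type*} [CommSemiring R] [DecidableEq σ]
    (m : σ) (A : σ →₀ ℕ) (P : MvPolynomial σ R) :
    MvPolynomial.coeff A (MvPolynomial.pderiv m P) =
      ((A m + 1 : ℕ) : R) * MvPolynomial.coeff (A + Finsupp.single m 1) P := by
  induction P using MvPolynomial.induction_on' with
  | monomial u a =>
    rw [MvPolynomial.pderiv_monomial, MvPolynomial.coeff_monomial,
      MvPolynomial.coeff_monomial]
    by_cases h : u = A + Finsupp.single m 1
    · subst h
      rw [if_pos (add_tsub_cancel_right _ _), if_pos rfl]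
      simp [mul_comm]
    · rw [if_neg h, mul_zero]
      split_ifs with heq
      · by_cases hm : u m = 0
        · simp [hm]
        · exfalso
          apply h
          rw [← heq, tsub_add_cancel_of_le (Finsupp.single_le_iff.mpr (by omega))]
      · rfl
  | add f g hf hg =>
    rw [map_add, MvPolynomial.coeff_add, MvPolynomial.coeff_add, hf, hg, mul_add]

theorem factorial_prod_add_single {n : ℕ} (A : Fin n →₀ ℕ) (m : Fin n) :
    ((A + Finsupp.single m 1).prod fun _ x => x.factorial) =
      (A m + 1) * A.prod fun _ x => x.factorial := by
  rw [Finsupp.prod_fintype _ _ (by simp), Finsupp.prod_fintype _ _ (by simp)]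
  have h : ∀ i : Fin n, (((A + Finsupp.single m 1) : Fin n →₀ ℕ) i).factorial =
      (if i = m then A i + 1 else 1) * (A i).factorial := by
    intro i
    by_cases h : i = m
    · subst h; simp [Nat.factorial_succ]
    · simp [Finsupp.single_apply, Ne.symm h, h]
  simp_rw [h]
  rw [Finset.prod_mul_distrib, Finset.prod_ite_eq' Finset.univ m (fun i => A i + 1)]
  simp
/-- The Jacobian matrix of the polynomial map `H : k^n → k^n`, evaluated at a point `x ∈ k^n`. -/
noncomputable def jacEval {k : Type*} [Field k] {n : ℕ}
    (H : Fin n → MvPolynomial (Fin n) k) (x : Fin n → k) : Matrix (Fin n) (Fin n) k :=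
  Matrix.of fun i j => MvPolynomial.eval x (MvPolynomial.pderiv j (H i))

/-- The coefficient `H_{i,β}`, i.e. `β!` times the coefficient of `X^β` in `H_i`, so that
`H_i = Σ_β (H_{i,β}/β!) X^β`. -/
noncomputable def coefSc {k : Type*} [Field k] {n : ℕ}
    (H : Fin n → MvPolynomial (Fin n) k) (i : Fin n) (β : Fin n →₀ ℕ) : k :=
  (β.prod fun _ m => (m.factorial : k)) * MvPolynomial.coeff β (H i)

/-- The strong fern lemma: if `JH` is strongly nilpotent with index `p`, then for all
`i, j` and all multi-indices `α⁽¹⁾,…,α⁽ᵖ⁾`, the sum over chains `k₀ = i, k₁,…,k_{p-1}, k_p = j`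
of the products `∏_ℓ H_{k_{ℓ-1}, α⁽ℓ⁾ + e_{k_ℓ}}` vanishes. -/
theorem strong_fern_lemma
    {k : Type*} [Field k] [CharZero k] {n : ℕ} (p : ℕ) (hp : 0 < p)
    (H : Fin n → MvPolynomial (Fin n) k)
    (hstrong : ∀ X : Fin p → (Fin n → k),
      (List.ofFn fun ℓ : Fin p => jacEval H (X ℓ)).prod = 0) :
    ∀ (i j : Fin n) (A : Fin p → (Fin n →₀ ℕ)),
      ∑ κ : Fin (p + 1) → Fin n,
        (if κ 0 = i ∧ κ (Fin.last p) = j then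
          ∏ ℓ : Fin p, coefSc H (κ ℓ.castSucc) (A ℓ + Finsupp.single (κ ℓ.succ) 1)
        else 0) = 0 := by
  classical
  intro i j A
  set M : Fin p → Matrix (Fin n) (Fin n) (MvPolynomial (Fin p × Fin n) k) :=
    fun ℓ => Matrix.of fun a b =>
      MvPolynomial.rename (Prod.mk ℓ) (MvPolynomial.pderiv b (H a)) with hMdef
  -- Step 1: the product of the generic Jacobian matrices vanishes
  have hM0 : (List.ofFn M).prod = 0 := by
    refine Matrix.ext fun a b => ?_
    rw [Matrix.zero_apply]
    apply MvPolynomial.funext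
    intro x
    rw [map_zero]
    have key : (MvPolynomial.eval x).mapMatrix ((List.ofFn M).prod) =
        (List.ofFn fun ℓ : Fin p => jacEval H (fun v => x (ℓ, v))).prod := by
      rw [map_list_prod, List.map_ofFn]
      refine congrArg _ (congrArg List.ofFn (funext fun ℓ => ?_))
      ext c d
      simp [hMdef, jacEval, MvPolynomial.eval_rename, Function.comp_def]
    have := congrFun (congrFun (congrArg (fun m => (m : Matrix (Fin n) (Fin n) k))
      (key.trans (hstrong fun ℓ v => x (ℓ, v)))) a) b
    simpa using this
  -- Step 2: entries of the product as sums over chains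
  have hentry := listProd_entry p M i j
  rw [hM0, Matrix.zero_apply] at hentry
  -- Step 3: extract the coefficient of the monomial determined by `A`
  have hc := congrArg
    (MvPolynomial.coeff (∑ ℓ : Fin p, (A ℓ).mapDomain (Prod.mk ℓ))) hentry.symm
  rw [MvPolynomial.coeff_zero, MvPolynomial.coeff_sum] at hc
  have hzero : ∑ κ : Fin (p + 1) → Fin n,
      (if κ 0 = i ∧ κ (Fin.last p) = j then
        ∏ ℓ : Fin p, MvPolynomial.coeff (A ℓ)
          (MvPolynomial.pderiv (κ ℓ.succ) (H (κ ℓ.castSucc)))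
      else 0) = 0 := by
    rw [← hc]
    refine Finset.sum_congr rfl fun κ _ => ?_
    rw [apply_ite (MvPolynomial.coeff (∑ ℓ : Fin p, (A ℓ).mapDomain (Prod.mk ℓ))),
      MvPolynomial.coeff_zero]
    congr 1
    exact (coeff_prod_rename
      (fun ℓ => MvPolynomial.pderiv (κ ℓ.succ) (H (κ ℓ.castSucc))) A Finset.univ).symm
  -- Step 4: relate `coefSc` to coefficients of partial derivatives
  calc (∑ κ : Fin (p + 1) → Fin n,
        (if κ 0 = i ∧ κ (Fin.last p) = j then
          ∏ ℓ : Fin p, coefSc H (κ ℓ.castSucc) (A ℓ + Finsupp.single (κ ℓ.succ) 1)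
        else 0))
      = (∏ ℓ : Fin p, ((A ℓ).prod fun _ x => (x.factorial : k))) *
        ∑ κ : Fin (p + 1) → Fin n,
        (if κ 0 = i ∧ κ (Fin.last p) = j then
          ∏ ℓ : Fin p, MvPolynomial.coeff (A ℓ)
            (MvPolynomial.pderiv (κ ℓ.succ) (H (κ ℓ.castSucc)))
        else 0) := by
        rw [Finset.mul_sum]
        refine Finset.sum_congr rfl fun κ _ => ?_
        rw [mul_ite, mul_zero]
        congr 1
        rw [← Finset.prod_mul_distrib]
        refine Finset.prod_congr rfl fun ℓ _ => ?_
        rw [coefSc]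
        have h1 : ((A ℓ + Finsupp.single (κ ℓ.succ) 1).prod
            (fun _ m => (m.factorial : k))) =
            (((A ℓ + Finsupp.single (κ ℓ.succ) 1).prod
              (fun _ m => m.factorial) : ℕ) : k) := by
          rw [Finsupp.prod]
          push_cast
          rfl
        have h2 : ((A ℓ).prod fun _ x => (x.factorial : k)) =
            (((A ℓ).prod fun _ x => x.factorial : ℕ) : k) := by
          rw [Finsupp.prod]
          push_cast
          rfl
        rw [h1, h2, factorial_prod_add_single, coeff_pderiv']
        push_cast
        ring
    _ = 0 := by rw [hzero, mul_zero]
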